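/- arXiv:math/9911214 — 2 statements merged into one kernel-verified Lean document; each statement's English description precedes it below -/
import Mathlib

section
/- Let P ⊆ ∘Δ and let J ⊆ ∘I be nonempty. (1) If P is a closed set, then ⟨P⟩ ⊔ Δ^im₊ is a convex set. (2) If P is a pointed closed set, then ⟨P⟩ is a real convex set. (3) If P is a pointed biclosed set in ∘Δ_J, then ⟨P⟩ is a real biconvex set in Δ_{J+}. -/
open scoped Pointwise

section

variable {ι V : Type*} [Fintype ι] [Nonempty ι] [AddCommGroup V] [Module ℝ V]

/-- The length of `w` with respect to a generating set `S` of a group. -/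
noncomputable def lenG {G : Type*} [Group G] (S : Set G) (w : G) : ℕ :=
  sInf {n | ∃ l : List G, (∀ x ∈ l, x ∈ S) ∧ l.length = n ∧ l.prod = w}

/-- `v` is a nonnegative linear combination of the simple roots `α` of `∘Δ`. -/
def PosoComb (α : ι → V) (v : V) : Prop :=
  ∃ c : ι → ℝ, (∀ i, 0 ≤ c i) ∧ v = ∑ i, c i • α i

/-- The parabolic subgroup `∘W_J = ⟨s_j | j ∈ J⟩` of the finite Weyl group, realized
inside the group of linear automorphisms of `𝔥* = V`. -/
def WoJ (α : ι → V) (s : V → V ≃ₗ[ℝ] V) (J : Set ι) : Subgroup (V ≃ₗ[ℝ] V) :=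
  Subgroup.closure ((fun j => s (α j)) '' J)

/-- `∘Δ_J = ∘W_J(∘Π_J)` (so `∘Δ_∅ = ∅`). -/
def DeloJ (α : ι → V) (s : V → V ≃ₗ[ℝ] V) (J : Set ι) : Set V :=
  {v | ∃ g ∈ WoJ α s J, ∃ j ∈ J, v = g (α j)}

/-- `∘Δ`, the root system of the underlying finite-dimensional simple Lie algebra. -/
def Delo (α : ι → V) (s : V → V ≃ₗ[ℝ] V) : Set V := DeloJ α s Set.univ

/-- `∘Δ^K_{J+} = (∘Δ_J ∖ ∘Δ_K) ∩ ∘Δ₊`. -/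
def DeloKJpos (α : ι → V) (s : V → V ≃ₗ[ℝ] V) (J K : Set ι) : Set V :=
  (DeloJ α s J \ DeloJ α s K) ∩ {v | PosoComb α v}

/-- `∘Δ^K_{J−} = (∘Δ_J ∖ ∘Δ_K) ∩ ∘Δ₋`. -/
def DeloKJneg (α : ι → V) (s : V → V ≃ₗ[ℝ] V) (J K : Set ι) : Set V :=
  (DeloJ α s J \ DeloJ α s K) ∩ {v | PosoComb α (-v)}

/-- The set `∘W^K_J` of minimal-length representatives of the right cosets `∘W_J/∘W_K`. -/
def MinReps (α : ι → V) (s : V → V ≃ₗ[ℝ] V) (J K : Set ι) : Set (V ≃ₗ[ℝ] V) :=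
  {w | w ∈ WoJ α s J ∧ ∀ v ∈ WoJ α s K,
    lenG (Set.range fun i => s (α i)) w ≤ lenG (Set.range fun i => s (α i)) (w * v)}

/-- The affine simple roots `Π = {α₀ = δ − θ} ∪ ∘Π`, indexed by `Option ι`. -/
def alHat (α : ι → V) (δ θ : V) : Option ι → V := fun o => o.elim (δ - θ) α

/-- `v` is a nonnegative linear combination of the affine simple roots. -/
def PosComb (α : ι → V) (δ θ : V) (v : V) : Prop :=
  ∃ c : Option ι → ℝ, (∀ o, 0 ≤ c o) ∧ v = ∑ o, c o • alHat α δ θ o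

/-- The real roots `Δ^re = {mδ + ε | m ∈ ℤ, ε ∈ ∘Δ}`. -/
def DelRe (α : ι → V) (δ : V) (s : V → V ≃ₗ[ℝ] V) : Set V :=
  {v | ∃ m : ℤ, ∃ ε ∈ Delo α s, v = m • δ + ε}

/-- The imaginary roots `Δ^im = {mδ | m ∈ ℤ ∖ {0}}`. -/
def DelIm (δ : V) : Set V := {v | ∃ m : ℤ, m ≠ 0 ∧ v = m • δ}

/-- The affine root system `Δ = Δ^re ∪ Δ^im`. -/
def Del (α : ι → V) (δ : V) (s : V → V ≃ₗ[ℝ] V) : Set V := DelRe α δ s ∪ DelIm δ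

/-- The positive roots `Δ₊` (relative to `Π`). -/
def DelPos (α : ι → V) (δ θ : V) (s : V → V ≃ₗ[ℝ] V) : Set V :=
  {v ∈ Del α δ s | PosComb α δ θ v}

/-- The negative roots `Δ₋ = −Δ₊`. -/
def DelNeg (α : ι → V) (δ θ : V) (s : V → V ≃ₗ[ℝ] V) : Set V :=
  {v | -v ∈ DelPos α δ θ s}

/-- `Δ^re₊ = Δ^re ∩ Δ₊`. -/
def DelRePos (α : ι → V) (δ θ : V) (s : V → V ≃ₗ[ℝ] V) : Set V :=
  DelRe α δ s ∩ DelPos α δ θ s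

/-- `Δ^im₊ = {mδ | m ≥ 1}`. -/
def DelImPos (δ : V) : Set V := {v | ∃ m : ℕ, 0 < m ∧ v = (m : ℤ) • δ}

/-- `⟨ε⟩ = {mδ + ε | m ∈ ℤ≥0} ∩ Δ^re₊`. -/
def brkt (α : ι → V) (δ θ : V) (s : V → V ≃ₗ[ℝ] V) (ε : V) : Set V :=
  {v | ∃ m : ℕ, v = (m : ℤ) • δ + ε} ∩ DelRePos α δ θ s

/-- `⟨P⟩ = ⋃_{ε ∈ P} ⟨ε⟩`. -/
def brSet (α : ι → V) (δ θ : V) (s : V → V ≃ₗ[ℝ] V) (P : Set V) : Set V :=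
  ⋃ ε ∈ P, brkt α δ θ s ε

/-- `Δ^re_J = {mδ + ε | m ∈ ℤ, ε ∈ ∘Δ_J}`. -/
def DelReJ (α : ι → V) (δ : V) (s : V → V ≃ₗ[ℝ] V) (J : Set ι) : Set V :=
  {v | ∃ m : ℤ, ∃ ε ∈ DeloJ α s J, v = m • δ + ε}

/-- `Δ_J = Δ^re_J ∪ Δ^im`. -/
def DelJ (α : ι → V) (δ : V) (s : V → V ≃ₗ[ℝ] V) (J : Set ι) : Set V :=
  DelReJ α δ s J ∪ DelIm δ

/-- `Δ_{J+} = Δ_J ∩ Δ₊`. -/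
def DelJPos (α : ι → V) (δ θ : V) (s : V → V ≃ₗ[ℝ] V) (J : Set ι) : Set V :=
  DelJ α δ s J ∩ DelPos α δ θ s

/-- `Δ_{J+} = ⟨∘Δ_J⟩ ∪ Δ^im₊` (the description used from Section 5 onwards). -/
def DelJPosB (α : ι → V) (δ θ : V) (s : V → V ≃ₗ[ℝ] V) (J : Set ι) : Set V :=
  brSet α δ θ s (DeloJ α s J) ∪ DelImPos δ

/-- The set of highest roots of the irreducible components of `∘Δ_J`, i.e. the maximal
elements of `∘Δ_{J+}`: the positive roots `ε` of `∘Δ_J` such that no `ε + α_j` is a root. -/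
def HighRoots (α : ι → V) (s : V → V ≃ₗ[ℝ] V) (J : Set ι) : Set V :=
  {ε ∈ DeloJ α s J | PosoComb α ε ∧ ∀ j ∈ J, ε + α j ∉ DeloJ α s J}

/-- `Π_J = ∘Π_J ⊔ {δ − θ_{J_c} | c}`. -/
def PiJ (α : ι → V) (δ : V) (s : V → V ≃ₗ[ℝ] V) (J : Set ι) : Set V :=
  (α '' J) ∪ (fun x => δ - x) '' HighRoots α s J

/-- `S_J = {s_α | α ∈ Π_J}`. -/
def SJ (α : ι → V) (δ : V) (s : V → V ≃ₗ[ℝ] V) (J : Set ι) : Set (V ≃ₗ[ℝ] V) :=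
  s '' PiJ α δ s J

/-- `W_J = ⟨S_J⟩` (so `W_∅ = {1}`). -/
def WJ (α : ι → V) (δ : V) (s : V → V ≃ₗ[ℝ] V) (J : Set ι) : Subgroup (V ≃ₗ[ℝ] V) :=
  Subgroup.closure (SJ α δ s J)

/-- `Φ_J(y) = {β ∈ Δ_{J+} | y⁻¹(β) < 0}`, with `Δ_{J+} = Δ_J ∩ Δ₊`. -/
def PhiJ (α : ι → V) (δ θ : V) (s : V → V ≃ₗ[ℝ] V) (J : Set ι) (y : V ≃ₗ[ℝ] V) : Set V :=
  {β ∈ DelJPos α δ θ s J | y⁻¹ β ∈ DelNeg α δ θ s}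

/-- `Φ_J(y) = {β ∈ Δ_{J+} | y⁻¹(β) < 0}`, with `Δ_{J+} = ⟨∘Δ_J⟩ ∪ Δ^im₊`. -/
def PhiJb (α : ι → V) (δ θ : V) (s : V → V ≃ₗ[ℝ] V) (J : Set ι) (y : V ≃ₗ[ℝ] V) : Set V :=
  {β ∈ DelJPosB α δ θ s J | y⁻¹ β ∈ DelNeg α δ θ s}

/-- `Δ^K_J(u, −) = ⟨u∘Δ^K_{J−}⟩`. -/
def DKJm (α : ι → V) (δ θ : V) (s : V → V ≃ₗ[ℝ] V) (J K : Set ι) (u : V ≃ₗ[ℝ] V) : Set V :=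
  brSet α δ θ s (⇑u '' DeloKJneg α s J K)

/-- `Δ^K_J(u, +) = ⟨u∘Δ^K_{J+}⟩`. -/
def DKJp (α : ι → V) (δ θ : V) (s : V → V ≃ₗ[ℝ] V) (J K : Set ι) (u : V ≃ₗ[ℝ] V) : Set V :=
  brSet α δ θ s (⇑u '' DeloKJpos α s J K)

/-- `B` is a convex set in `A`: `B ⊆ A` and `β, γ ∈ B`, `β + γ ∈ A` imply `β + γ ∈ B`. -/
def ConvexIn (A B : Set V) : Prop :=
  B ⊆ A ∧ ∀ x ∈ B, ∀ y ∈ B, x + y ∈ A → x + y ∈ B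

/-- `B` is a biconvex set in `A`: both `B` and `A ∖ B` are convex sets in `A`. -/
def BiconvexIn (A B : Set V) : Prop :=
  ConvexIn A B ∧ ConvexIn A (A \ B)

/-- `P ⊆ ∘Δ` is a closed set. -/
def ClosedIn (Δo P : Set V) : Prop :=
  ∀ ε ∈ P, ∀ η ∈ P, ε + η ∈ Δo → ε + η ∈ P

/-- The coroot `α_j^∨ = 2α_j/(α_j|α_j)`. -/
noncomputable def coroot (α : ι → V) (B : V →ₗ[ℝ] V →ₗ[ℝ] ℝ) (j : ι) : V :=
  (2 / B (α j) (α j)) • α j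

/-- The coroot lattice `∘Q^∨_J = ⊕_{j ∈ J} ℤ α_j^∨`. -/
def QJ (α : ι → V) (B : V →ₗ[ℝ] V →ₗ[ℝ] ℝ) (J : Set ι) : Set V :=
  {lam | ∃ c : ι → ℤ, (∀ j, j ∉ J → c j = 0) ∧ lam = ∑ j, c j • coroot α B j}

/-- `g` acts as the translation `t_λ`: `g(μ) = μ − (μ|λ)δ` for `μ` in the span of `Π`. -/
def IsTransl (α : ι → V) (δ θ : V) (B : V →ₗ[ℝ] V →ₗ[ℝ] ℝ) (lam : V)
    (g : V ≃ₗ[ℝ] V) : Prop :=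
  ∀ μ ∈ Submodule.span ℝ (Set.range (alHat α δ θ)), g μ = μ - B μ lam • δ

/-- The translation subgroup `T_J = {t_λ | λ ∈ ∘Q^∨_J}` of `W_J`. -/
def TJ (α : ι → V) (δ θ : V) (B : V →ₗ[ℝ] V →ₗ[ℝ] ℝ) (s : V → V ≃ₗ[ℝ] V)
    (J : Set ι) : Set (V ≃ₗ[ℝ] V) :=
  {g | g ∈ WJ α δ s J ∧ ∃ lam ∈ QJ α B J, IsTransl α δ θ B lam g}

/-- The hypotheses describing the root datum of an untwisted affine Kac–Moody Lie algebra
over `ℝ`: `α` are the simple roots of the underlying finite-dimensional simple Lie algebra,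
`δ` is the null root, `θ` the highest root of `∘Δ`, `B` the standard invariant bilinear form,
and `s a` the reflection in a (real) root `a`. -/
structure AffineSetup (α : ι → V) (δ θ : V) (B : V →ₗ[ℝ] V →ₗ[ℝ] ℝ)
    (s : V → V ≃ₗ[ℝ] V) : Prop where
  indep : LinearIndependent ℝ (alHat α δ θ)
  Bsymm : ∀ u v : V, B u v = B v u
  Bpos : ∀ v ∈ Delo α s, 0 < B v v
  refl_def : ∀ a : V, B a a ≠ 0 → ∀ v : V, s a v = v - (2 * B v a / B a a) • a
  delta_orth : ∀ i : ι, B δ (α i) = 0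
  delta_null : B δ δ = 0
  theta_high : θ ∈ HighRoots α s Set.univ
  cryst : ∀ i : ι, ∀ v ∈ Delo α s, ∃ m : ℤ, s (α i) v = v - m • α i
  base : ∀ v ∈ Delo α s, Xor' (PosoComb α v) (PosoComb α (-v))
  finite : (Delo α s).Finite
  reduced : ∀ v ∈ Delo α s, (2 : ℝ) • v ∉ Delo α s
  irred : ∀ A : Set ι, (∀ i ∈ A, ∀ j ∈ Aᶜ, s (α i) (α j) = α j) → A = ∅ ∨ A = Set.univ

set_option linter.unusedSectionVars false
set_option linter.unnecessarySeqFocus false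

namespace Aux512

variable {ι V : Type*} [Fintype ι] [Nonempty ι] [AddCommGroup V] [Module ℝ V]
variable {α : ι → V} {δ θ : V} {B : V →ₗ[ℝ] V →ₗ[ℝ] ℝ} {s : V → V ≃ₗ[ℝ] V}

lemma alpha_mem_delo (i : ι) : α i ∈ Delo α s :=
  ⟨1, one_mem _, i, trivial, rfl⟩

lemma alpha_ne_zero (h : AffineSetup α δ θ B s) (i : ι) : α i ≠ 0 :=
  h.indep.ne_zero (some i)

lemma invol (h : AffineSetup α δ θ B s) {a : V} (ha : a ∈ Delo α s) (v : V) :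
    s a (s a v) = v := by
  have hB : B a a ≠ 0 := (h.Bpos a ha).ne'
  rw [h.refl_def a hB, h.refl_def a hB]
  simp only [map_sub, map_smul, LinearMap.sub_apply, LinearMap.smul_apply, smul_eq_mul]
  match_scalars <;> field_simp <;> ring

lemma refl_inv (h : AffineSetup α δ θ B s) {a : V} (ha : a ∈ Delo α s) :
    (s a)⁻¹ = s a := by
  apply inv_eq_of_mul_eq_one_left
  ext v
  exact invol h ha v

lemma span_stable (h : AffineSetup α δ θ B s) {g : V ≃ₗ[ℝ] V}
    (hg : g ∈ WoJ α s (Set.univ : Set ι)) :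
    (∀ v ∈ Submodule.span ℝ (Set.range α), g v ∈ Submodule.span ℝ (Set.range α)) ∧
    (∀ v ∈ Submodule.span ℝ (Set.range α), g⁻¹ v ∈ Submodule.span ℝ (Set.range α)) := by
  induction hg using Subgroup.closure_induction with
  | mem x hx =>
    obtain ⟨i, -, rfl⟩ := hx
    have key : ∀ v ∈ Submodule.span ℝ (Set.range α),
        s (α i) v ∈ Submodule.span ℝ (Set.range α) := by
      intro v hv
      have hB : B (α i) (α i) ≠ 0 := (h.Bpos _ (alpha_mem_delo i)).ne'
      rw [h.refl_def _ hB]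
      exact sub_mem hv (Submodule.smul_mem _ _ (Submodule.subset_span ⟨i, rfl⟩))
    exact ⟨key, by rw [refl_inv h (alpha_mem_delo i)]; exact key⟩
  | one => exact ⟨fun v hv => by simpa using hv, fun v hv => by simpa using hv⟩
  | mul x y hx hy ihx ihy =>
    refine ⟨fun v hv => ?_, fun v hv => ?_⟩
    · exact ihx.1 _ (ihy.1 _ hv)
    · rw [mul_inv_rev]; exact ihy.2 _ (ihx.2 _ hv)
  | inv x hx ihx => exact ⟨ihx.2, by simpa using ihx.1⟩

lemma delo_span (h : AffineSetup α δ θ B s) {v : V} (hv : v ∈ Delo α s) :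
    v ∈ Submodule.span ℝ (Set.range α) := by
  obtain ⟨g, hg, j, -, rfl⟩ := hv
  exact (span_stable h hg).1 _ (Submodule.subset_span ⟨j, rfl⟩)

lemma theta_span (h : AffineSetup α δ θ B s) : θ ∈ Submodule.span ℝ (Set.range α) :=
  delo_span h h.theta_high.1

lemma delta_not_span (h : AffineSetup α δ θ B s) :
    δ ∉ Submodule.span ℝ (Set.range α) := by
  intro hδ
  have h2 : alHat α δ θ '' (Set.range Option.some) = Set.range α := by
    ext v
    constructor
    · rintro ⟨o, ⟨i, rfl⟩, rfl⟩; exact ⟨i, rfl⟩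
    · rintro ⟨i, rfl⟩; exact ⟨some i, ⟨i, rfl⟩, rfl⟩
  have h1 : alHat α δ θ none ∉ Submodule.span ℝ (alHat α δ θ '' (Set.range Option.some)) :=
    h.indep.notMem_span_image (by simp)
  rw [h2] at h1
  exact h1 (sub_mem hδ (theta_span h))

lemma uniq (h : AffineSetup α δ θ B s) {m₁ m₂ : ℝ} {ε₁ ε₂ : V}
    (h₁ : ε₁ ∈ Submodule.span ℝ (Set.range α))
    (h₂ : ε₂ ∈ Submodule.span ℝ (Set.range α))
    (heq : m₁ • δ + ε₁ = m₂ • δ + ε₂) : m₁ = m₂ ∧ ε₁ = ε₂ := by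
  by_cases hm : m₁ = m₂
  · subst hm
    exact ⟨rfl, by exact add_left_cancel heq⟩
  · exfalso
    apply delta_not_span h
    have hd : (m₁ - m₂) • δ = ε₂ - ε₁ := by
      rw [sub_smul]
      have := heq
      abel_nf
      linear_combination (norm := module) heq
    have : δ = (m₁ - m₂)⁻¹ • (ε₂ - ε₁) := by
      rw [← hd, smul_smul, inv_mul_cancel₀ (sub_ne_zero.2 hm), one_smul]
    rw [this]
    exact Submodule.smul_mem _ _ (sub_mem h₂ h₁)

lemma zsm (m : ℤ) (v : V) : m • v = (m : ℝ) • v := (Int.cast_smul_eq_zsmul ℝ m v).symm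

lemma natsm (m : ℕ) (v : V) : (m : ℤ) • v = (m : ℝ) • v := by
  rw [zsm]; norm_num

lemma zero_not_delo (h : AffineSetup α δ θ B s) : (0 : V) ∉ Delo α s := by
  rintro ⟨g, hg, j, -, hj⟩
  exact alpha_ne_zero h j (g.map_eq_zero_iff.1 hj.symm)

lemma deloJ_sub (J : Set ι) : DeloJ α s J ⊆ Delo α s := by
  rintro v ⟨g, hg, j, hjJ, rfl⟩
  exact ⟨g, Subgroup.closure_mono (Set.image_mono (Set.subset_univ J)) hg, j, trivial, rfl⟩

lemma coeff_nonneg (h : AffineSetup α δ θ B s) {v : V} (hv : PosComb α δ θ v) {m : ℤ} {ε : V}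
    (hε : ε ∈ Submodule.span ℝ (Set.range α)) (heq : v = (m : ℝ) • δ + ε) : 0 ≤ m := by
  obtain ⟨c, hc, hsum⟩ := hv
  have hv2 : v = c none • δ + (∑ i, c (some i) • α i - c none • θ) := by
    rw [hsum, Fintype.sum_option]
    simp only [alHat, Option.elim]
    module
  have hu : (∑ i, c (some i) • α i - c none • θ) ∈ Submodule.span ℝ (Set.range α) :=
    sub_mem (Submodule.sum_mem _ fun i _ =>
        Submodule.smul_mem _ _ (Submodule.subset_span ⟨i, rfl⟩))
      (Submodule.smul_mem _ _ (theta_span h))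
  have h3 : (m : ℝ) = c none := (uniq h hε hu (heq.symm.trans hv2)).1
  have h4 : (0 : ℝ) ≤ (m : ℝ) := h3 ▸ hc none
  exact_mod_cast h4

lemma del_cases {v : V} (hv : v ∈ Del α δ s) :
    (∃ m : ℤ, ∃ ε ∈ Delo α s, v = (m : ℝ) • δ + ε) ∨
      (∃ m : ℤ, m ≠ 0 ∧ v = (m : ℝ) • δ) := by
  rcases hv with ⟨m, ε, hε, rfl⟩ | ⟨m, hm, rfl⟩
  · exact Or.inl ⟨m, ε, hε, by rw [zsm]⟩
  · exact Or.inr ⟨m, hm, by rw [zsm]⟩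

lemma brSet_elim {P : Set V} {v : V} (hv : v ∈ brSet α δ θ s P) :
    ∃ ε ∈ P, ∃ m : ℕ, v = (m : ℝ) • δ + ε ∧ v ∈ DelRePos α δ θ s := by
  simp only [brSet, Set.mem_iUnion] at hv
  obtain ⟨ε, hε, ⟨m, hm⟩, hre⟩ := hv
  exact ⟨ε, hε, m, by rw [hm, natsm], hre⟩

lemma brSet_sub {P : Set V} : brSet α δ θ s P ⊆ DelRePos α δ θ s := by
  intro v hv
  obtain ⟨ε, -, m, -, h2⟩ := brSet_elim hv
  exact h2

lemma mem_brSet {P : Set V} {ε v : V} (hε : ε ∈ P) (hεd : ε ∈ Delo α s) (m : ℕ)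
    (hv : v = (m : ℝ) • δ + ε) (hpos : v ∈ DelPos α δ θ s) : v ∈ brSet α δ θ s P := by
  have hv' : v = (m : ℤ) • δ + ε := by rw [natsm]; exact hv
  have hre : v ∈ DelRe α δ s := ⟨m, ε, hεd, hv'⟩
  exact Set.mem_biUnion hε ⟨⟨m, hv'⟩, hre, hpos⟩

lemma core (h : AffineSetup α δ θ B s) {P : Set V} (hP : P ⊆ Delo α s)
    (hcl : ClosedIn (Delo α s) P) {x y : V}
    (hx : x ∈ brSet α δ θ s P) (hy : y ∈ brSet α δ θ s P)
    (hxy : x + y ∈ DelPos α δ θ s) :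
    x + y ∈ brSet α δ θ s P ∨ (∃ ε ∈ P, -ε ∈ P ∧ x + y ∈ DelImPos δ) := by
  obtain ⟨ε, hεP, a, hxe, -⟩ := brSet_elim hx
  obtain ⟨η, hηP, b, hye, -⟩ := brSet_elim hy
  have hεs := delo_span h (hP hεP)
  have hηs := delo_span h (hP hηP)
  have hsum : x + y = ((a + b : ℕ) : ℝ) • δ + (ε + η) := by
    rw [hxe, hye]; push_cast; module
  rcases del_cases hxy.1 with ⟨m, ε', hε', he⟩ | ⟨m, hm, he⟩
  · obtain ⟨-, hee⟩ := uniq h (add_mem hεs hηs) (delo_span h hε') (hsum.symm.trans he)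
    have hεη : ε + η ∈ P := hcl ε hεP η hηP (hee ▸ hε')
    exact Or.inl (mem_brSet hεη (hP hεη) (a + b) hsum hxy)
  · have he' : x + y = (m : ℝ) • δ + 0 := by rw [he, add_zero]
    obtain ⟨hm2, h0⟩ := uniq h (add_mem hεs hηs) (Submodule.zero_mem _)
      (hsum.symm.trans he')
    refine Or.inr ⟨ε, hεP, ?_, ?_⟩
    · have : -ε = η := neg_eq_of_add_eq_zero_right h0
      exact this ▸ hηP
    · have hab : a + b ≠ 0 := by
        intro h00
        apply hm
        have : ((a + b : ℕ) : ℝ) = (0 : ℝ) := by rw [h00]; norm_num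
        have := hm2.symm.trans this
        exact_mod_cast this
      exact ⟨a + b, Nat.pos_of_ne_zero hab, by rw [natsm, ← add_zero (((a+b:ℕ):ℝ) • δ), ← h0, ← hsum]⟩

lemma delImPos_sub (h : AffineSetup α δ θ B s) : DelImPos δ ⊆ DelPos α δ θ s := by
  rintro v ⟨m, hm, rfl⟩
  refine ⟨Or.inr ⟨m, by exact_mod_cast hm.ne', rfl⟩, ?_⟩
  obtain ⟨c, hc, hθ⟩ := h.theta_high.2.1
  refine ⟨fun o => o.elim (m : ℝ) fun i => (m : ℝ) * c i, fun o => ?_, ?_⟩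
  · cases o with
    | none =>
      show (0 : ℝ) ≤ (m : ℝ)
      exact_mod_cast Nat.zero_le m
    | some i =>
      show (0 : ℝ) ≤ (m : ℝ) * c i
      exact mul_nonneg (by exact_mod_cast Nat.zero_le m) (hc i)
  · rw [Fintype.sum_option]
    show (m : ℤ) • δ = (m : ℝ) • (δ - θ) + ∑ i, ((m : ℝ) * c i) • α i
    have hs : ∑ i, ((m : ℝ) * c i) • α i = (m : ℝ) • ∑ i, c i • α i := by
      rw [Finset.smul_sum]
      exact Finset.sum_congr rfl fun i _ => by rw [smul_smul]
    rw [hs, ← hθ, natsm]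
    module

lemma delJPos_cases (h : AffineSetup α δ θ B s) {J : Set ι} {v : V}
    (hv : v ∈ DelJPos α δ θ s J) :
    (∃ m : ℤ, 0 ≤ m ∧ ∃ ε ∈ DeloJ α s J, v = (m : ℝ) • δ + ε) ∨
      (∃ m : ℤ, m ≠ 0 ∧ v = (m : ℝ) • δ) := by
  rcases hv.1 with ⟨m, ε, hε, rfl⟩ | ⟨m, hm, rfl⟩
  · refine Or.inl ⟨m, ?_, ε, hε, by rw [zsm]⟩
    exact coeff_nonneg h hv.2.2 (delo_span h (deloJ_sub J hε)) (by rw [zsm])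
  · exact Or.inr ⟨m, hm, by rw [zsm]⟩

lemma pointed_absurd {P : Set V} (hpt : P ∩ (-P) = ∅) {ε : V} (hε : ε ∈ P)
    (hnε : -ε ∈ P) : False :=
  Set.eq_empty_iff_forall_notMem.1 hpt ε ⟨hε, Set.mem_neg.2 hnε⟩

end Aux512

open Aux512

/-- Proposition 5.8: (1) if `P ⊆ ∘Δ` is closed, then `⟨P⟩ ⊔ Δ^im₊` is a convex set;
(2) if `P` is pointed closed, then `⟨P⟩` is a real convex set; (3) if `P` is a pointed
biclosed set in `∘Δ_J`, then `⟨P⟩` is a real biconvex set in `Δ_{J+}`. -/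
theorem statement12 (α : ι → V) (δ θ : V) (B : V →ₗ[ℝ] V →ₗ[ℝ] ℝ) (s : V → V ≃ₗ[ℝ] V)
    (h : AffineSetup α δ θ B s) (J : Set ι) (hJ : J.Nonempty) (P : Set V)
    (hP : P ⊆ Delo α s) :
    (ClosedIn (Delo α s) P →
      ConvexIn (DelPos α δ θ s) (brSet α δ θ s P ∪ DelImPos δ)) ∧
    (ClosedIn (Delo α s) P → P ∩ (-P) = ∅ →
      ConvexIn (DelPos α δ θ s) (brSet α δ θ s P) ∧
        brSet α δ θ s P ⊆ DelRePos α δ θ s) ∧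
    (P ⊆ DeloJ α s J → P ∩ (-P) = ∅ → ClosedIn (Delo α s) P →
      ClosedIn (Delo α s) (DeloJ α s J \ P) →
      BiconvexIn (DelJPos α δ θ s J) (brSet α δ θ s P) ∧
        brSet α δ θ s P ⊆ DelRePos α δ θ s) := by
  refine ⟨?_, ?_, ?_⟩
  · -- Part (1)
    intro hcl
    constructor
    · rintro v (hv | hv)
      · exact (brSet_sub hv).2
      · exact delImPos_sub h hv
    · rintro x (hx | hx) y (hy | hy) hxy
      · rcases core h hP hcl hx hy hxy with h1 | ⟨ε, -, -, h2⟩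
        · exact Or.inl h1
        · exact Or.inr h2
      · obtain ⟨ε, hεP, a, hxe, -⟩ := brSet_elim hx
        obtain ⟨b, hb, rfl⟩ := hy
        refine Or.inl (mem_brSet hεP (hP hεP) (a + b) ?_ hxy)
        rw [hxe, natsm]; push_cast; module
      · obtain ⟨ε, hεP, a, hye, -⟩ := brSet_elim hy
        obtain ⟨b, hb, rfl⟩ := hx
        refine Or.inl (mem_brSet hεP (hP hεP) (b + a) ?_ hxy)
        rw [hye, natsm]; push_cast; module
      · obtain ⟨a, ha, rfl⟩ := hx
        obtain ⟨b, hb, rfl⟩ := hy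
        refine Or.inr ⟨a + b, by omega, ?_⟩
        rw [natsm, natsm, natsm]; push_cast; module
  · -- Part (2)
    intro hcl hpt
    refine ⟨⟨fun v hv => (brSet_sub hv).2, ?_⟩, brSet_sub⟩
    intro x hx y hy hxy
    rcases core h hP hcl hx hy hxy with h1 | ⟨ε, hε, hnε, -⟩
    · exact h1
    · exact (pointed_absurd hpt hε hnε).elim
  · -- Part (3)
    intro hPJ hpt hcl hclc
    have hsubJ : brSet α δ θ s P ⊆ DelJPos α δ θ s J := by
      intro v hv
      obtain ⟨ε, hεP, m, hve, hre⟩ := brSet_elim hv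
      exact ⟨Or.inl ⟨m, ε, hPJ hεP, by rw [natsm]; exact hve⟩, hre.2⟩
    refine ⟨⟨⟨hsubJ, ?_⟩, Set.diff_subset, ?_⟩, brSet_sub⟩
    · intro x hx y hy hxy
      rcases core h hP hcl hx hy hxy.2 with h1 | ⟨ε, hε, hnε, -⟩
      · exact h1
      · exact (pointed_absurd hpt hε hnε).elim
    · intro x hx y hy hxy
      refine ⟨hxy, fun hbr => ?_⟩
      obtain ⟨ε, hεP, m, hse, -⟩ := brSet_elim hbr
      rcases delJPos_cases h hx.1 with ⟨a, ha, ε₁, hε₁, hxe⟩ | ⟨a, ha, hxe⟩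
      · rcases delJPos_cases h hy.1 with ⟨b, hb, ε₂, hε₂, hye⟩ | ⟨b, hb, hye⟩
        · -- real + real
          have h1s := delo_span h (deloJ_sub J hε₁)
          have h2s := delo_span h (deloJ_sub J hε₂)
          have hsum : x + y = ((a : ℝ) + (b : ℝ)) • δ + (ε₁ + ε₂) := by
            rw [hxe, hye]; module
          obtain ⟨-, hee⟩ := uniq h (add_mem h1s h2s) (delo_span h (hP hεP))
            (hsum.symm.trans hse)
          have hca : ((a.toNat : ℕ) : ℝ) = (a : ℝ) := by
            exact_mod_cast Int.toNat_of_nonneg ha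
          have hcb : ((b.toNat : ℕ) : ℝ) = (b : ℝ) := by
            exact_mod_cast Int.toNat_of_nonneg hb
          have hne₁ : ε₁ ∉ P := fun hmem =>
            hx.2 (mem_brSet hmem (hP hmem) a.toNat (by rw [hca]; exact hxe) hx.1.2)
          have hne₂ : ε₂ ∉ P := fun hmem =>
            hy.2 (mem_brSet hmem (hP hmem) b.toNat (by rw [hcb]; exact hye) hy.1.2)
          have hmem : ε₁ + ε₂ ∈ DeloJ α s J \ P :=
            hclc ε₁ ⟨hε₁, hne₁⟩ ε₂ ⟨hε₂, hne₂⟩ (by rw [hee]; exact hP hεP)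
          rw [hee] at hmem
          exact hmem.2 hεP
        · -- real + imaginary
          have hsum : x + y = ((a : ℝ) + (b : ℝ)) • δ + ε₁ := by rw [hxe, hye]; module
          obtain ⟨-, hee⟩ := uniq h (delo_span h (deloJ_sub J hε₁))
            (delo_span h (hP hεP)) (hsum.symm.trans hse)
          have hε₁P : ε₁ ∈ P := by rw [hee]; exact hεP
          have hca : ((a.toNat : ℕ) : ℝ) = (a : ℝ) := by
            exact_mod_cast Int.toNat_of_nonneg ha
          exact hx.2 (mem_brSet hε₁P (hP hε₁P) a.toNat (by rw [hca]; exact hxe) hx.1.2)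
      · rcases delJPos_cases h hy.1 with ⟨b, hb, ε₂, hε₂, hye⟩ | ⟨b, hb, hye⟩
        · -- imaginary + real
          have hsum : x + y = ((a : ℝ) + (b : ℝ)) • δ + ε₂ := by rw [hxe, hye]; module
          obtain ⟨-, hee⟩ := uniq h (delo_span h (deloJ_sub J hε₂))
            (delo_span h (hP hεP)) (hsum.symm.trans hse)
          have hε₂P : ε₂ ∈ P := by rw [hee]; exact hεP
          have hcb : ((b.toNat : ℕ) : ℝ) = (b : ℝ) := by
            exact_mod_cast Int.toNat_of_nonneg hb
          exact hy.2 (mem_brSet hε₂P (hP hε₂P) b.toNat (by rw [hcb]; exact hye) hy.1.2)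
        · -- imaginary + imaginary
          have hsum : x + y = ((a : ℝ) + (b : ℝ)) • δ + 0 := by rw [hxe, hye]; module
          obtain ⟨-, hee⟩ := uniq h (Submodule.zero_mem _)
            (delo_span h (hP hεP)) (hsum.symm.trans hse)
          exact zero_not_delo h (by rw [hee]; exact hP hεP)


end
end

section
/- Let J ⊆ ∘I be nonempty and let B be a real convex set in Δ_{J+}. Set B̄ = {β̄ | β ∈ B} and P_B = {ε ∈ ∘Δ_J | ⟨ε⟩∖B is finite}. Then both B̄ and P_B are pointed closed subsets of ∘Δ_J with P_B ⊆ B̄. Moreover, if B is a real biconvex set in Δ_{J+}, then P_B is a pointed biclosed set in ∘Δ_J. -/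
open scoped Pointwise

section

variable {ι V : Type*} [Fintype ι] [Nonempty ι] [AddCommGroup V] [Module ℝ V]

set_option linter.unusedSectionVars false
set_option maxHeartbeats 1000000
section Aux

variable {ι V : Type*} [Fintype ι] [Nonempty ι] [AddCommGroup V] [Module ℝ V]
variable {α : ι → V} {δ θ : V} {Bl : V →ₗ[ℝ] V →ₗ[ℝ] ℝ} {s : V → V ≃ₗ[ℝ] V}

open scoped Classical

namespace AS

lemma alpha_indep (h : AffineSetup α δ θ Bl s) : LinearIndependent ℝ α := by
  have := h.indep.comp some (Option.some_injective ι)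
  exact this

lemma uniq (h : AffineSetup α δ θ Bl s) {c d : ι → ℝ}
    (e : ∑ i, c i • α i = ∑ i, d i • α i) : c = d := by
  have h1 := Fintype.linearIndependent_iff.mp (alpha_indep h) (fun i => c i - d i) ?_
  · funext i; have := h1 i; linarith
  · simp [sub_smul, Finset.sum_sub_distrib, e]

lemma dmt_not_span (h : AffineSetup α δ θ Bl s) :
    (δ - θ) ∉ Submodule.span ℝ (Set.range α) := by
  intro hmem
  rw [Submodule.mem_span_range_iff_exists_fun ℝ] at hmem
  obtain ⟨c, hc⟩ := hmem
  have h1 := Fintype.linearIndependent_iff.mp h.indep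
    (fun o => Option.elim o (-1 : ℝ) c) ?_
  · simpa using h1 none
  · rw [Fintype.sum_option]
    simp only [Option.elim, alHat]
    rw [← hc]; module

lemma alpha_mem_DeloJ {J : Set ι} {j : ι} (hj : j ∈ J) : α j ∈ DeloJ α s J :=
  ⟨1, one_mem _, j, hj, by simp⟩

lemma alpha_mem_Delo (i : ι) : α i ∈ Delo α s := alpha_mem_DeloJ (Set.mem_univ i)

lemma DeloJ_subset_Delo {J : Set ι} : DeloJ α s J ⊆ Delo α s := by
  rintro v ⟨g, hg, j, hj, rfl⟩
  exact ⟨g, Subgroup.closure_mono (Set.image_mono (Set.subset_univ J)) hg, j,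
    Set.mem_univ j, rfl⟩

lemma smul_mem_DeloJ {J : Set ι} {g : V ≃ₗ[ℝ] V} {v : V} (hg : g ∈ WoJ α s J)
    (hv : v ∈ DeloJ α s J) : g v ∈ DeloJ α s J := by
  obtain ⟨g', hg', j, hj, rfl⟩ := hv
  exact ⟨g * g', mul_mem hg hg', j, hj, rfl⟩

lemma sj_mem_WoJ {J : Set ι} {j : ι} (hj : j ∈ J) : s (α j) ∈ WoJ α s J :=
  Subgroup.subset_closure ⟨j, hj, rfl⟩

lemma Balpha_ne (h : AffineSetup α δ θ Bl s) (i : ι) : Bl (α i) (α i) ≠ 0 :=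
  ne_of_gt (h.Bpos _ (alpha_mem_Delo i))

lemma B_root_ne (h : AffineSetup α δ θ Bl s) {v : V} (hv : v ∈ Delo α s) :
    Bl v v ≠ 0 := ne_of_gt (h.Bpos _ hv)

lemma s_apply (h : AffineSetup α δ θ Bl s) {a : V} (ha : a ∈ Delo α s) (v : V) :
    s a v = v - (2 * Bl v a / Bl a a) • a := h.refl_def a (B_root_ne h ha) v

lemma s_invol (h : AffineSetup α δ θ Bl s) {a : V} (ha : a ∈ Delo α s) (v : V) :
    s a (s a v) = v := by
  have hne := B_root_ne h ha
  rw [s_apply h ha, s_apply h ha]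
  have : Bl (v - (2 * Bl v a / Bl a a) • a) a = - Bl v a := by
    simp only [map_sub, map_smul, LinearMap.sub_apply, LinearMap.smul_apply, smul_eq_mul]
    field_simp
    ring
  rw [this]
  have h2 : (2 * -Bl v a / Bl a a) • a = - ((2 * Bl v a / Bl a a) • a) := by
    rw [mul_neg, neg_div, neg_smul]
  rw [h2]; abel

lemma s_orth (h : AffineSetup α δ θ Bl s) {a : V} (ha : a ∈ Delo α s) (v w : V) :
    Bl (s a v) (s a w) = Bl v w := by
  have hne := B_root_ne h ha
  rw [s_apply h ha, s_apply h ha]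
  simp only [map_sub, map_smul, LinearMap.sub_apply, LinearMap.smul_apply, smul_eq_mul]
  rw [h.Bsymm a w]
  field_simp
  ring

lemma mulApply (f g : V ≃ₗ[ℝ] V) (v : V) : (f * g) v = f (g v) := rfl

lemma root_ne_zero (h : AffineSetup α δ θ Bl s) {v : V} (hv : v ∈ Delo α s) : v ≠ 0 := by
  rintro rfl
  have hp : PosoComb α (0:V) := ⟨0, fun i => le_refl 0, by simp⟩
  have hx := h.base 0 hv
  rw [neg_zero] at hx
  rcases hx with ⟨_, hn⟩ | ⟨_, hn⟩ <;> exact hn hp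

lemma zero_not_Delo (h : AffineSetup α δ θ Bl s) : (0:V) ∉ Delo α s :=
  fun h0 => root_ne_zero h h0 rfl

lemma sj_sj (h : AffineSetup α δ θ Bl s) {a : V} (ha : a ∈ Delo α s) :
    s a * s a = 1 := by
  apply LinearEquiv.toLinearMap_injective
  apply LinearMap.ext
  intro v
  simpa using s_invol h ha v

lemma sj_inv (h : AffineSetup α δ θ Bl s) {a : V} (ha : a ∈ Delo α s) :
    (s a)⁻¹ = s a := by
  exact inv_eq_of_mul_eq_one_right (sj_sj h ha)

lemma W_ind (h : AffineSetup α δ θ Bl s) {J : Set ι} (p : (V ≃ₗ[ℝ] V) → Prop)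
    (h1 : p 1) (hmul : ∀ j ∈ J, ∀ g, p g → p (s (α j) * g))
    {g : V ≃ₗ[ℝ] V} (hg : g ∈ WoJ α s J) : p g := by
  induction hg using Subgroup.closure_induction_left with
  | one => exact h1
  | mul_left x hx y hy hp =>
      obtain ⟨j, hj, rfl⟩ := hx
      exact hmul j hj y hp
  | inv_mul_cancel x hx y hy hp =>
      obtain ⟨j, hj, rfl⟩ := hx
      rw [sj_inv h (alpha_mem_Delo j)]
      exact hmul j hj y hp

lemma W_orth (h : AffineSetup α δ θ Bl s) {J : Set ι} {g : V ≃ₗ[ℝ] V}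
    (hg : g ∈ WoJ α s J) : ∀ v w, Bl (g v) (g w) = Bl v w := by
  refine W_ind h (fun g => ∀ v w, Bl (g v) (g w) = Bl v w) (by simp) ?_ hg
  intro j _ g' hp v w
  rw [mulApply, mulApply, s_orth h (alpha_mem_Delo j)]
  exact hp v w

lemma W_span (h : AffineSetup α δ θ Bl s) {J : Set ι} {g : V ≃ₗ[ℝ] V}
    (hg : g ∈ WoJ α s J) {v : V} (hv : v ∈ Submodule.span ℝ (Set.range α)) :
    g v ∈ Submodule.span ℝ (Set.range α) := by
  refine W_ind h (fun g => ∀ v ∈ Submodule.span ℝ (Set.range α),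
    g v ∈ Submodule.span ℝ (Set.range α)) (by simp) ?_ hg v hv
  intro j _ g' hp v hv
  rw [mulApply, s_apply h (alpha_mem_Delo j)]
  exact Submodule.sub_mem _ (hp v hv)
    (Submodule.smul_mem _ _ (Submodule.subset_span ⟨j, rfl⟩))

lemma Delo_span (h : AffineSetup α δ θ Bl s) {v : V} (hv : v ∈ Delo α s) :
    v ∈ Submodule.span ℝ (Set.range α) := by
  obtain ⟨g, hg, j, _, rfl⟩ := hv
  exact W_span h hg (Submodule.subset_span ⟨j, rfl⟩)

lemma root_coords (h : AffineSetup α δ θ Bl s) {v : V} (hv : v ∈ Delo α s) :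
    ∃ c : ι → ℝ, v = ∑ i, c i • α i := by
  obtain ⟨c, hc⟩ := (Submodule.mem_span_range_iff_exists_fun ℝ).mp (Delo_span h hv)
  exact ⟨c, hc.symm⟩

/-- `v` has coordinates supported in `J`. -/
def SuppJ (α : ι → V) (J : Set ι) (v : V) : Prop :=
  ∃ c : ι → ℝ, (∀ i, i ∉ J → c i = 0) ∧ v = ∑ i, c i • α i

lemma suppJ_sub_single {J : Set ι} {v : V} (hv : SuppJ α J v) {j : ι} (hj : j ∈ J)
    (r : ℝ) : SuppJ α J (v - r • α j) := by
  obtain ⟨c, hc0, rfl⟩ := hv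
  refine ⟨fun i => c i - (if i = j then r else 0), ?_, ?_⟩
  · intro i hi
    dsimp only
    rw [hc0 i hi, if_neg (fun e => hi (by rwa [e]))]
    ring
  · simp [sub_smul, Finset.sum_sub_distrib, ite_smul]

lemma W_suppJ (h : AffineSetup α δ θ Bl s) {J : Set ι} {g : V ≃ₗ[ℝ] V}
    (hg : g ∈ WoJ α s J) {v : V} (hv : SuppJ α J v) : SuppJ α J (g v) := by
  refine W_ind h (fun g => ∀ v, SuppJ α J v → SuppJ α J (g v)) (fun v hv => hv) ?_ hg v hv
  intro j hj g' hp v hv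
  rw [mulApply, s_apply h (alpha_mem_Delo j)]
  exact suppJ_sub_single (hp v hv) hj _

lemma DeloJ_suppJ (h : AffineSetup α δ θ Bl s) {J : Set ι} {v : V}
    (hv : v ∈ DeloJ α s J) : SuppJ α J v := by
  obtain ⟨g, hg, j, hj, rfl⟩ := hv
  refine W_suppJ h hg ⟨fun i => if i = j then 1 else 0, ?_, ?_⟩
  · intro i hi
    exact if_neg (fun e => hi (by rwa [e]))
  · simp [ite_smul]

lemma sj_self (h : AffineSetup α δ θ Bl s) {a : V} (ha : a ∈ Delo α s) :
    s a a = -a := by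
  rw [s_apply h ha]
  have hne := B_root_ne h ha
  have : 2 * Bl a a / Bl a a = 2 := by field_simp
  rw [this]
  module

lemma neg_mem_DeloJ (h : AffineSetup α δ θ Bl s) {J : Set ι} {v : V}
    (hv : v ∈ DeloJ α s J) : -v ∈ DeloJ α s J := by
  obtain ⟨g, hg, j, hj, rfl⟩ := hv
  refine ⟨g * s (α j), mul_mem hg (sj_mem_WoJ hj), j, hj, ?_⟩
  rw [mulApply, sj_self h (alpha_mem_Delo j), map_neg]

lemma smul_mem_Delo (h : AffineSetup α δ θ Bl s) {J : Set ι} {g : V ≃ₗ[ℝ] V}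
    (hg : g ∈ WoJ α s J) {v : V} (hv : v ∈ Delo α s) : g v ∈ Delo α s :=
  smul_mem_DeloJ (Subgroup.closure_mono (Set.image_mono (Set.subset_univ J)) hg) hv

lemma neg_mem_Delo (h : AffineSetup α δ θ Bl s) {v : V} (hv : v ∈ Delo α s) :
    -v ∈ Delo α s := neg_mem_DeloJ h hv

lemma pairing (h : AffineSetup α δ θ Bl s) {v b : V} (hv : v ∈ Delo α s)
    (hb : b ∈ Delo α s) : ∃ m : ℤ, 2 * Bl v b / Bl b b = (m:ℝ) := by
  obtain ⟨g, hg, i, _, rfl⟩ := hb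
  set b := g (α i) with hbdef
  have horth := W_orth h hg
  have h1 : Bl v b = Bl (g.symm v) (α i) := by
    conv_lhs => rw [show v = g (g.symm v) from (g.apply_symm_apply v).symm]
    exact horth _ _
  have h2 : Bl b b = Bl (α i) (α i) := horth _ _
  have hv' : g.symm v ∈ Delo α s := by
    have : g.symm v = g⁻¹ v := rfl
    rw [this]
    exact smul_mem_Delo h (inv_mem hg) hv
  obtain ⟨m, hm⟩ := h.cryst i _ hv'
  rw [s_apply h (alpha_mem_Delo i)] at hm
  have h3 : (2 * Bl (g.symm v) (α i) / Bl (α i) (α i)) • α i = (m:ℝ) • α i := by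
    rw [← Int.cast_smul_eq_zsmul ℝ, sub_right_inj] at hm
    exact hm
  have h5 := smul_left_injective ℝ (root_ne_zero h (alpha_mem_Delo i)) h3
  exact ⟨m, by rw [h1, h2, h5]⟩

lemma reflRoot (h : AffineSetup α δ θ Bl s) {b : V} (hb : b ∈ Delo α s) :
    ∃ g ∈ WoJ α s Set.univ, ∀ v, g v = v - (2 * Bl v b / Bl b b) • b := by
  obtain ⟨g0, hg0, i, _, rfl⟩ := hb
  set b := g0 (α i) with hbdef
  have horth := W_orth h hg0
  refine ⟨g0 * s (α i) * g0⁻¹,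
    mul_mem (mul_mem hg0 (sj_mem_WoJ (Set.mem_univ i))) (inv_mem hg0), fun v => ?_⟩
  have h1 : Bl v b = Bl (g0.symm v) (α i) := by
    conv_lhs => rw [show v = g0 (g0.symm v) from (g0.apply_symm_apply v).symm]
    exact horth _ _
  have h2 : Bl b b = Bl (α i) (α i) := horth _ _
  rw [mulApply, mulApply]
  have h3 : (g0⁻¹ : V ≃ₗ[ℝ] V) v = g0.symm v := rfl
  rw [h3, s_apply h (alpha_mem_Delo i), map_sub, map_smul, g0.apply_symm_apply, h1, h2]

/-- Coordinate sequence for the ping-pong argument. -/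
def PP (p q : ℝ) : ℕ → ℝ × ℝ
  | 0 => (1, 0)
  | n+1 => (-(PP p q n).1 - q * (PP p q n).2, p * (PP p q n).1 + (p*q-1) * (PP p q n).2)

lemma PP_lt {p q : ℝ} (hp : 2 ≤ p) (hq : 2 ≤ q) :
    ∀ n, 0 ≤ (PP p q n).2 ∧ (PP p q n).2 < (PP p q (n+1)).2 := by
  intro n
  induction n with
  | zero => simp [PP]; nlinarith
  | succ n ih =>
      obtain ⟨h0, hlt⟩ := ih
      constructor
      · linarith
      · show (PP p q (n+1)).2 < (PP p q (n+2)).2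
        have e1 : (PP p q (n+2)).2 = (p*q-2) * (PP p q (n+1)).2 - (PP p q n).2 := by
          show p * (PP p q (n+1)).1 + (p*q-1) * (PP p q (n+1)).2 = _
          show p * (-(PP p q n).1 - q * (PP p q n).2) +
            (p*q-1) * (p * (PP p q n).1 + (p*q-1) * (PP p q n).2) = _
          show _ = (p*q-2) * (p * (PP p q n).1 + (p*q-1) * (PP p q n).2) - (PP p q n).2
          ring
        rw [e1]
        nlinarith [mul_nonneg (show (0:ℝ) ≤ p*q - 4 by nlinarith) (le_trans h0 hlt.le)]

lemma pingpong (h : AffineSetup α δ θ Bl s) {b c : V} (hb : b ∈ Delo α s)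
    (hc : c ∈ Delo α s)
    (hind : ∀ x y : ℝ, x • b + y • c = 0 → x = 0 ∧ y = 0)
    (hp : 2 ≤ 2 * Bl b c / Bl c c) (hq : 2 ≤ 2 * Bl c b / Bl b b) : False := by
  have hBb := B_root_ne h hb
  have hBc := B_root_ne h hc
  set p := 2 * Bl b c / Bl c c with hpdef
  set q := 2 * Bl c b / Bl b b with hqdef
  obtain ⟨rb, hrbW, hrb⟩ := reflRoot h hb
  obtain ⟨rc, hrcW, hrc⟩ := reflRoot h hc
  set t := rc * rb with htdef
  have htW : t ∈ WoJ α s Set.univ := mul_mem hrcW hrbW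
  have htb : t b = -b + p • c := by
    rw [htdef, mulApply, hrb]
    have e1 : 2 * Bl b b / Bl b b = 2 := by field_simp
    rw [e1]
    have e2 : b - (2:ℝ) • b = -b := by module
    rw [e2, hrc, map_neg]
    simp only [LinearMap.neg_apply]
    have e3 : 2 * -(Bl b c) / Bl c c = -p := by rw [hpdef]; ring
    rw [e3]
    module
  have htc : t c = (-q) • b + (p*q-1) • c := by
    rw [htdef, mulApply, hrb, ← hqdef, hrc]
    have e1 : Bl (c - q • b) c = Bl c c - q * Bl b c := by
      simp [map_sub, map_smul]
    rw [e1]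
    have e2 : 2 * (Bl c c - q * Bl b c) / Bl c c = 2 - q * p := by
      rw [hpdef]
      field_simp
    rw [e2]
    module
  set z : ℕ → V := fun n => (PP p q n).1 • b + (PP p q n).2 • c with hzdef
  have hz : ∀ n, z (n+1) = t (z n) := by
    intro n
    show (PP p q (n+1)).1 • b + (PP p q (n+1)).2 • c = t _
    rw [map_add, map_smul, map_smul, htb, htc]
    show (-(PP p q n).1 - q * (PP p q n).2) • b +
      (p * (PP p q n).1 + (p*q-1) * (PP p q n).2) • c = _
    module
  have hmem : ∀ n, z n ∈ Delo α s := by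
    intro n
    induction n with
    | zero =>
        show (1:ℝ) • b + (0:ℝ) • c ∈ _
        simpa using hb
    | succ n ih =>
        rw [hz]
        exact smul_mem_Delo h htW ih
  have hbmono : StrictMono (fun n => (PP p q n).2) :=
    strictMono_nat_of_lt_succ (fun n => (PP_lt hp hq n).2)
  have hinj : Function.Injective z := by
    intro m n hmn
    by_contra hne
    have : (PP p q m).2 = (PP p q n).2 := by
      have e : ((PP p q m).1 - (PP p q n).1) • b + ((PP p q m).2 - (PP p q n).2) • c = 0 := by
        rw [sub_smul, sub_smul]
        rw [hzdef] at hmn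
        simp only at hmn
        rw [sub_add_sub_comm, hmn, sub_self]
      have := (hind _ _ e).2
      linarith [sub_eq_zero.mp this]
    exact hne (hbmono.injective this)
  exact (Set.infinite_of_injective_forall_mem hinj hmem) h.finite

lemma sumroot (h : AffineSetup α δ θ Bl s) {b c : V} (hb : b ∈ Delo α s)
    (hc : c ∈ Delo α s) (hne : b + c ≠ 0) (hneg : Bl b c < 0) : b + c ∈ Delo α s := by
  have hBb := h.Bpos b hb
  have hBc := h.Bpos c hc
  have hcb : Bl c b < 0 := by rw [h.Bsymm]; exact hneg
  obtain ⟨m1, hm1⟩ := pairing h hb hc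
  obtain ⟨m2, hm2⟩ := pairing h hc hb
  have hm1neg : (m1:ℝ) < 0 := by
    rw [← hm1]
    exact div_neg_of_neg_of_pos (by linarith) hBc
  have hm2neg : (m2:ℝ) < 0 := by
    rw [← hm2]
    exact div_neg_of_neg_of_pos (by linarith) hBb
  have hm1le : m1 ≤ -1 := by
    have : m1 < 0 := by exact_mod_cast hm1neg
    omega
  have hm2le : m2 ≤ -1 := by
    have : m2 < 0 := by exact_mod_cast hm2neg
    omega
  by_cases h1 : m1 = -1
  · obtain ⟨g, hgW, hg⟩ := reflRoot h hc
    have : g b = b + c := by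
      rw [hg, hm1, h1]
      push_cast
      module
    rw [← this]
    exact smul_mem_Delo h hgW hb
  by_cases h2 : m2 = -1
  · obtain ⟨g, hgW, hg⟩ := reflRoot h hb
    have : g c = b + c := by
      rw [hg, hm2, h2]
      push_cast
      module
    rw [← this]
    exact smul_mem_Delo h hgW hc
  have hm1le2 : m1 ≤ -2 := by omega
  have hm2le2 : m2 ≤ -2 := by omega
  by_cases hdep : ∀ x y : ℝ, x • b + y • (-c) = 0 → x = 0 ∧ y = 0
  · exfalso
    refine pingpong h hb (neg_mem_Delo h hc) hdep ?_ ?_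
    · have e1 : Bl b (-c) = - Bl b c := by simp
      have e2 : Bl (-c) (-c) = Bl c c := by simp
      rw [e1, e2]
      have : 2 * (- Bl b c) / Bl c c = -(m1 : ℝ) := by
        rw [← hm1]; ring
      rw [this]
      have : (2:ℝ) ≤ -(m1:ℝ) := by
        have : ((-2 : ℤ) : ℝ) ≥ (m1 : ℝ) := by exact_mod_cast hm1le2
        push_cast at this
        linarith
      linarith
    · have e1 : Bl (-c) b = - Bl c b := by simp
      rw [e1]
      have : 2 * (- Bl c b) / Bl b b = -(m2 : ℝ) := by
        rw [← hm2]; ring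
      rw [this]
      have : ((-2 : ℤ) : ℝ) ≥ (m2 : ℝ) := by exact_mod_cast hm2le2
      push_cast at this
      linarith
  · push_neg at hdep
    obtain ⟨x, y, hxy, hno⟩ := hdep
    exfalso
    have hbne := root_ne_zero h hb
    have hcne := root_ne_zero h hc
    have hx : x ≠ 0 := by
      rintro rfl
      simp only [zero_smul, zero_add, smul_neg] at hxy
      rw [neg_eq_zero, smul_eq_zero] at hxy
      rcases hxy with h' | h'
      · exact hno rfl h'
      · exact hcne h'
    set r := x⁻¹ * y with hrdef
    have hbr : b = r • c := by
      have e : x • b = y • c := by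
        have := hxy
        rw [smul_neg, add_neg_eq_zero] at this
        exact this
      have := congrArg (fun v => x⁻¹ • v) e
      simp only [smul_smul, inv_mul_cancel₀ hx, one_smul] at this
      rw [this]
    have hr0 : r ≠ 0 := by
      intro hr
      rw [hr, zero_smul] at hbr
      exact hbne hbr
    have hbc : Bl b c = r * Bl c c := by rw [hbr]; simp [map_smul]
    have hcb' : Bl c b = r * Bl c c := by rw [h.Bsymm c b, hbc]
    have hbb : Bl b b = r * r * Bl c c := by
      rw [hbr]; simp [map_smul]; ring
    have hem1 : (m1:ℝ) = 2 * r := by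
      rw [← hm1, hbc]
      field_simp
    have hem2 : (m2:ℝ) = 2 / r := by
      rw [← hm2, hcb', hbb]
      have hBcne : Bl c c ≠ 0 := ne_of_gt hBc
      field_simp
    have hprod : ((m1 * m2 : ℤ) : ℝ) = 4 := by
      push_cast
      rw [hem1, hem2]
      field_simp
      ring
    have hprodz : m1 * m2 = 4 := by exact_mod_cast hprod
    have hm1eq : m1 = -2 := by nlinarith
    have hreq : r = -1 := by
      rw [hm1eq] at hem1
      push_cast at hem1
      linarith
    rw [hreq] at hbr
    apply hne
    rw [hbr]
    module

lemma obtuse (h : AffineSetup α δ θ Bl s) {i j : ι} (hij : i ≠ j) :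
    Bl (α i) (α j) ≤ 0 := by
  by_contra hpos
  push_neg at hpos
  obtain ⟨m, hm⟩ := pairing h (alpha_mem_Delo j) (alpha_mem_Delo i)
  have hBii := h.Bpos _ (alpha_mem_Delo i)
  have hji : 0 < Bl (α j) (α i) := by rw [h.Bsymm]; exact hpos
  have hmpos : (0:ℝ) < (m:ℝ) := by
    rw [← hm]
    positivity
  set v := s (α i) (α j) with hvdef
  have hv : v ∈ Delo α s :=
    smul_mem_Delo h (sj_mem_WoJ (Set.mem_univ i)) (alpha_mem_Delo j)
  have hveq : v = α j - (m:ℝ) • α i := by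
    rw [hvdef, s_apply h (alpha_mem_Delo i), hm]
  set c : ι → ℝ := fun k => (if k = j then 1 else 0) - (m:ℝ) * (if k = i then 1 else 0)
    with hcdef
  have hvc : v = ∑ k, c k • α k := by
    rw [hveq, hcdef]
    simp [sub_smul, mul_smul, ite_smul, Finset.sum_sub_distrib]
  rcases h.base v hv with ⟨⟨d, hd0, hdv⟩, -⟩ | ⟨⟨d, hd0, hdv⟩, -⟩
  · have hdc : d = c := uniq h (hdv.symm.trans hvc)
    have h2 := hd0 i
    rw [hdc, hcdef] at h2
    norm_num [hij] at h2
    have : (0:ℤ) < m := by exact_mod_cast hmpos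
    omega
  · have hmc : -v = ∑ k, (-c k) • α k := by
      rw [hvc]
      simp
    have hdc : d = fun k => -c k := uniq h (hdv.symm.trans hmc)
    have h2 := hd0 j
    rw [hdc] at h2
    norm_num [hcdef, Ne.symm hij] at h2

lemma theta_mem (h : AffineSetup α δ θ Bl s) : θ ∈ Delo α s := h.theta_high.1

lemma theta_pos (h : AffineSetup α δ θ Bl s) :
    ∃ t : ι → ℝ, (∀ i, 0 < t i) ∧ θ = ∑ i, t i • α i := by
  obtain ⟨hθD, ⟨t, ht0, htθ⟩, hθH⟩ := h.theta_high
  refine ⟨t, ?_, htθ⟩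
  by_contra hA
  push_neg at hA
  obtain ⟨j, htj⟩ := hA
  set A : Set ι := {i | 0 < t i} with hAdef
  have hjA : j ∉ A := by
    intro hj
    have : 0 < t j := hj
    linarith
  have hyp : ∀ i ∈ A, ∀ k ∈ Aᶜ, s (α i) (α k) = α k := by
    intro i hiA k hkA
    have hti : 0 < t i := hiA
    have htk : t k = 0 := le_antisymm (not_lt.mp hkA) (ht0 k)
    have hsum : Bl θ (α k) = ∑ l, t l * Bl (α l) (α k) := by
      rw [htθ]
      simp [map_sum, map_smul]
    have hterms : ∀ l ∈ Finset.univ, t l * Bl (α l) (α k) ≤ 0 := by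
      intro l _
      by_cases hlk : l = k
      · rw [hlk, htk]
        simp
      · exact mul_nonpos_iff.mpr (Or.inl ⟨ht0 l, obtuse h hlk⟩)
    have hBθk : Bl θ (α k) ≤ 0 := by
      rw [hsum]
      exact Finset.sum_nonpos hterms
    have hne : θ + α k ≠ 0 := by
      intro he
      have e : ∑ l, (t l + if l = k then 1 else 0) • α l = θ + α k := by
        rw [htθ]
        simp [add_smul, Finset.sum_add_distrib, ite_smul]
      have e2 : ∑ l, (t l + if l = k then 1 else 0) • α l = ∑ l, (0:ℝ) • α l := by
        rw [e, he]
        simp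
      have e3 := congrFun (uniq h e2) k
      simp only [if_pos rfl] at e3
      norm_num at e3
      linarith [ht0 k]
    have hBθk0 : Bl θ (α k) = 0 := by
      rcases lt_or_eq_of_le hBθk with hlt | heq
      · exact absurd (sumroot h (theta_mem h) (alpha_mem_Delo k) hne hlt)
          (hθH k (Set.mem_univ k))
      · exact heq
    have hall := (Finset.sum_eq_zero_iff_of_nonpos hterms).mp (by rw [← hsum, hBθk0])
    have hi0 : Bl (α i) (α k) = 0 := by
      rcases mul_eq_zero.mp (hall i (Finset.mem_univ i)) with h' | h'
      · exact absurd h' (ne_of_gt hti)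
      · exact h'
    rw [s_apply h (alpha_mem_Delo i), h.Bsymm (α k) (α i), hi0]
    simp
  rcases h.irred A hyp with hA0 | hAu
  · have hθ0 : θ = 0 := by
      rw [htθ]
      apply Finset.sum_eq_zero
      intro l _
      have hl : t l = 0 := by
        have hlA : l ∉ A := by
          rw [hA0]
          exact Set.notMem_empty l
        exact le_antisymm (not_lt.mp hlA) (ht0 l)
      rw [hl, zero_smul]
    exact root_ne_zero h (theta_mem h) hθ0
  · apply hjA
    rw [hAu]
    trivial


/-- Height of a vector (via chosen coordinates). -/
noncomputable def htf (α : ι → V) (v : V) : ℝ :=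
  if hv : ∃ c : ι → ℝ, v = ∑ i, c i • α i then ∑ i, hv.choose i else 0

lemma htf_spec (h : AffineSetup α δ θ Bl s) {v : V} {c : ι → ℝ}
    (hc : v = ∑ i, c i • α i) : htf α v = ∑ i, c i := by
  have hv : ∃ c : ι → ℝ, v = ∑ i, c i • α i := ⟨c, hc⟩
  rw [htf, dif_pos hv]
  have he := uniq h ((hv.choose_spec).symm.trans hc)
  exact Finset.sum_congr rfl (fun i _ => congrFun he i)

lemma key (h : AffineSetup α δ θ Bl s) {J : Set ι} :
    ∀ γ ∈ Delo α s, ∀ c : ι → ℝ, (∀ i, 0 ≤ c i) → (∀ i, i ∉ J → c i = 0) →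
      γ = ∑ i, c i • α i → γ ∈ DeloJ α s J := by
  by_contra hbad
  push_neg at hbad
  obtain ⟨γ0, hγ0, c0, h1, h2, h3, h4⟩ := hbad
  set S : Set V := {γ | γ ∈ Delo α s ∧ γ ∉ DeloJ α s J ∧
    ∃ c : ι → ℝ, (∀ i, 0 ≤ c i) ∧ (∀ i, i ∉ J → c i = 0) ∧ γ = ∑ i, c i • α i} with hS
  have hSne : S.Nonempty := ⟨γ0, hγ0, h4, c0, h1, h2, h3⟩
  have hSfin : S.Finite := h.finite.subset (fun x hx => hx.1)
  obtain ⟨γ, hγS, hγmin⟩ := Set.exists_min_image S (htf α) hSfin hSne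
  obtain ⟨hγD, hγJ, c, hc0, hcJ, hceq⟩ := hγS
  have hBγ : 0 < Bl γ γ := h.Bpos γ hγD
  have hsum : Bl γ γ = ∑ i, c i * Bl γ (α i) := by
    calc Bl γ γ = Bl γ (∑ i, c i • α i) := by rw [← hceq]
    _ = ∑ i, c i * Bl γ (α i) := by simp [map_sum, map_smul]
  have hex : ∃ j, 0 < c j * Bl γ (α j) := by
    by_contra hno
    push_neg at hno
    have : Bl γ γ ≤ 0 := by
      rw [hsum]
      exact Finset.sum_nonpos (fun i _ => hno i)
    linarith
  obtain ⟨j, hj⟩ := hex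
  have hcj : 0 < c j := by
    rcases lt_or_eq_of_le (hc0 j) with h' | h'
    · exact h'
    · rw [← h'] at hj
      simp at hj
  have hBγj : 0 < Bl γ (α j) := by
    by_contra hle
    push_neg at hle
    nlinarith
  have hjJ : j ∈ J := by
    by_contra hjJ'
    rw [hcJ j hjJ'] at hcj
    exact lt_irrefl 0 hcj
  have hBjj := h.Bpos _ (alpha_mem_Delo j)
  by_cases hprop : ∀ i, i ≠ j → c i = 0
  · have hγeq : γ = c j • α j := by
      rw [hceq]
      rw [Finset.sum_eq_single j (fun i _ hij => by rw [hprop i hij, zero_smul])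
        (fun hm => absurd (Finset.mem_univ j) hm)]
    obtain ⟨m1, hm1⟩ := pairing h hγD (alpha_mem_Delo j)
    obtain ⟨m2, hm2⟩ := pairing h (alpha_mem_Delo j) hγD
    have e1 : Bl γ (α j) = c j * Bl (α j) (α j) := by
      rw [hγeq]
      simp [map_smul]
    have e2 : Bl γ γ = c j * c j * Bl (α j) (α j) := by
      rw [hγeq]
      simp [map_smul]
      ring
    have hem1 : (m1:ℝ) = 2 * c j := by
      rw [← hm1, e1]
      field_simp
    have hem2 : (m2:ℝ) = 2 / c j := by
      rw [← hm2, h.Bsymm (α j) γ, e1, e2]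
      rw [div_eq_div_iff (by positivity) (by positivity)]
      ring
    have hm1pos : 0 < m1 := by
      have : (0:ℝ) < (m1:ℝ) := by rw [hem1]; positivity
      exact_mod_cast this
    have hm2pos : 0 < m2 := by
      have : (0:ℝ) < (m2:ℝ) := by rw [hem2]; positivity
      exact_mod_cast this
    have hprodz : m1 * m2 = 4 := by
      have : ((m1 * m2 : ℤ):ℝ) = 4 := by
        push_cast
        rw [hem1, hem2]
        field_simp
        ring
      exact_mod_cast this
    have h14 : m1 = 1 ∨ m1 = 2 ∨ m1 = 4 := by
      have hle : m1 ≤ 4 := by nlinarith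
      interval_cases m1 <;> omega
    rcases h14 with e | e | e
    · have hcj2 : c j = 1/2 := by
        rw [e] at hem1
        push_cast at hem1
        linarith
      apply h.reduced γ hγD
      have : (2:ℝ) • γ = α j := by
        rw [hγeq, hcj2, smul_smul]
        norm_num
      rw [this]
      exact alpha_mem_Delo j
    · have hcj1 : c j = 1 := by
        rw [e] at hem1
        push_cast at hem1
        linarith
      apply hγJ
      rw [hγeq, hcj1, one_smul]
      exact alpha_mem_DeloJ hjJ
    · have hcj2 : c j = 2 := by
        rw [e] at hem1
        push_cast at hem1
        linarith
      apply h.reduced (α j) (alpha_mem_Delo j)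
      have : (2:ℝ) • α j = γ := by
        rw [hγeq, hcj2]
      rw [this]
      exact hγD
  · push_neg at hprop
    obtain ⟨k, hkj, hck⟩ := hprop
    obtain ⟨m, hm⟩ := pairing h hγD (alpha_mem_Delo j)
    have hmpos : (0:ℝ) < (m:ℝ) := by
      rw [← hm]
      positivity
    set γ' := s (α j) γ with hγ'def
    have hγ'D : γ' ∈ Delo α s :=
      smul_mem_Delo h (sj_mem_WoJ (Set.mem_univ j)) hγD
    have hγ'eq : γ' = γ - (m:ℝ) • α j := by
      rw [hγ'def, s_apply h (alpha_mem_Delo j), hm]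
    set c' : ι → ℝ := fun i => c i - (m:ℝ) * (if i = j then 1 else 0) with hc'def
    have hc'eq : γ' = ∑ i, c' i • α i := by
      rw [hγ'eq, hceq, hc'def]
      simp [sub_smul, mul_smul, ite_smul, Finset.sum_sub_distrib]
    have hc'J : ∀ i, i ∉ J → c' i = 0 := by
      intro i hi
      rw [hc'def]
      dsimp only
      rw [hcJ i hi, if_neg (fun e => hi (by rwa [e]))]
      ring
    have hc'k : c' k = c k := by
      rw [hc'def]
      dsimp only
      rw [if_neg hkj]
      ring
    have hck0 : 0 < c k := lt_of_le_of_ne (hc0 k) (Ne.symm hck)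
    have hc'0 : ∀ i, 0 ≤ c' i := by
      rcases h.base γ' hγ'D with ⟨⟨d, hd0, hdeq⟩, -⟩ | ⟨⟨d, hd0, hdeq⟩, -⟩
      · have hdc : d = c' := uniq h (hdeq.symm.trans hc'eq)
        intro i
        rw [← hdc]
        exact hd0 i
      · exfalso
        have e : -γ' = ∑ i, (-c' i) • α i := by
          rw [hc'eq]
          simp
        have hdc : d = fun i => -c' i := uniq h (hdeq.symm.trans e)
        have h5 := hd0 k
        rw [hdc] at h5
        dsimp only at h5
        rw [hc'k] at h5
        linarith
    have hγ'J : γ' ∈ DeloJ α s J := by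
      by_contra hγ'J'
      have hmem : γ' ∈ S := ⟨hγ'D, hγ'J', c', hc'0, hc'J, hc'eq⟩
      have hlt : htf α γ' < htf α γ := by
        rw [htf_spec h hc'eq, htf_spec h hceq]
        have e : ∑ i, c' i = (∑ i, c i) - (m:ℝ) := by
          rw [hc'def]
          rw [Finset.sum_sub_distrib]
          simp [← Finset.mul_sum]
        rw [e]
        linarith
      exact absurd (hγmin γ' hmem) (not_le.mpr hlt)
    apply hγJ
    have hγγ' : γ = s (α j) γ' := by
      rw [hγ'def, s_invol h (alpha_mem_Delo j)]
    rw [hγγ']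
    exact smul_mem_DeloJ (sj_mem_WoJ hjJ) hγ'J

lemma DeloJ_closed (h : AffineSetup α δ θ Bl s) {J : Set ι} {x y : V}
    (hx : x ∈ DeloJ α s J) (hy : y ∈ DeloJ α s J) (hxy : x + y ∈ Delo α s) :
    x + y ∈ DeloJ α s J := by
  obtain ⟨cx, hcxJ, hcx⟩ := DeloJ_suppJ h hx
  obtain ⟨cy, hcyJ, hcy⟩ := DeloJ_suppJ h hy
  have hsum : x + y = ∑ i, (cx i + cy i) • α i := by
    rw [hcx, hcy]
    simp [add_smul, Finset.sum_add_distrib]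
  rcases h.base _ hxy with ⟨⟨d, hd0, hdeq⟩, -⟩ | ⟨⟨d, hd0, hdeq⟩, -⟩
  · have hdc : d = fun i => cx i + cy i := uniq h (hdeq.symm.trans hsum)
    refine key h _ hxy d hd0 (fun i hi => ?_) hdeq
    rw [hdc]
    dsimp only
    rw [hcxJ i hi, hcyJ i hi]
    ring
  · have hneg : -(x+y) ∈ Delo α s := neg_mem_Delo h hxy
    have hnege : -(x+y) = ∑ i, (-(cx i + cy i)) • α i := by
      rw [hsum, ← Finset.sum_neg_distrib]
      exact Finset.sum_congr rfl (fun i _ => (neg_smul _ _).symm)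
    have hdc : d = fun i => -(cx i + cy i) := uniq h (hdeq.symm.trans hnege)
    have hmem : -(x+y) ∈ DeloJ α s J := by
      refine key h _ hneg d hd0 (fun i hi => ?_) hdeq
      rw [hdc]
      dsimp only
      rw [hcxJ i hi, hcyJ i hi]
      ring
    have := neg_mem_DeloJ h hmem
    rwa [neg_neg] at this

lemma delta_not_span (h : AffineSetup α δ θ Bl s) :
    δ ∉ Submodule.span ℝ (Set.range α) := by
  intro hδ
  exact dmt_not_span h (Submodule.sub_mem _ hδ (Delo_span h (theta_mem h)))

lemma delta_ne_zero (h : AffineSetup α δ θ Bl s) : δ ≠ 0 := by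
  intro e
  exact delta_not_span h (e ▸ Submodule.zero_mem _)

lemma decomp_uniq (h : AffineSetup α δ θ Bl s) {m n : ℤ} {x y : V}
    (hx : x ∈ Submodule.span ℝ (Set.range α)) (hy : y ∈ Submodule.span ℝ (Set.range α))
    (e : m • δ + x = n • δ + y) : m = n ∧ x = y := by
  by_cases hmn : m = n
  · subst hmn
    exact ⟨rfl, by rwa [add_right_inj] at e⟩
  · exfalso
    have e2 : (m - n) • δ = y - x := by
      calc (m - n) • δ = (m • δ + x) - (n • δ + x) := by rw [sub_smul]; abel
      _ = (n • δ + y) - (n • δ + x) := by rw [e]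
      _ = y - x := by abel
    have e3 : ((m - n : ℤ):ℝ) • δ = y - x := by
      rw [Int.cast_smul_eq_zsmul]
      exact e2
    have hne : ((m - n : ℤ):ℝ) ≠ 0 := by
      exact_mod_cast sub_ne_zero.mpr hmn
    have hδ : δ = ((m - n : ℤ):ℝ)⁻¹ • (y - x) := by
      rw [← e3, smul_smul, inv_mul_cancel₀ hne, one_smul]
    exact delta_not_span h
      (hδ ▸ Submodule.smul_mem _ _ (Submodule.sub_mem _ hy hx))

lemma cofinal (h : AffineSetup α δ θ Bl s) {ε : V} (he : ε ∈ Delo α s) :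
    ∃ M : ℕ, ∀ m : ℕ, M ≤ m → ((m:ℤ) • δ + ε) ∈ DelRePos α δ θ s := by
  obtain ⟨t, ht0, htθ⟩ := theta_pos h
  obtain ⟨c, hc⟩ := root_coords h he
  obtain ⟨M, hM⟩ := exists_nat_ge (∑ i, |c i / t i|)
  refine ⟨M, fun m hm => ?_⟩
  have hcoef : ∀ i, 0 ≤ (m:ℝ) * t i + c i := by
    intro i
    have h1 : |c i / t i| ≤ (M:ℝ) :=
      le_trans (Finset.single_le_sum (f := fun i => |c i / t i|)
        (fun i _ => abs_nonneg _) (Finset.mem_univ i)) hM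
    have h2 : -(c i) / t i ≤ (M:ℝ) := by
      rw [neg_div]
      exact le_trans (neg_le_abs _) h1
    have hti := ht0 i
    have hMm : (M:ℝ) ≤ (m:ℝ) := by exact_mod_cast hm
    rw [div_le_iff₀ hti] at h2
    nlinarith
  refine ⟨⟨(m:ℤ), ε, he, rfl⟩, Or.inl ⟨(m:ℤ), ε, he, rfl⟩, ?_⟩
  refine ⟨fun o => Option.elim o (m:ℝ) (fun i => (m:ℝ) * t i + c i), ?_, ?_⟩
  · intro o
    cases o with
    | none => exact Nat.cast_nonneg m
    | some i => exact hcoef i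
  · rw [Fintype.sum_option]
    simp only [Option.elim, alHat]
    rw [show ((m:ℤ) • δ : V) = (m:ℝ) • δ by rw [← Int.cast_smul_eq_zsmul ℝ]; norm_num]
    rw [hc, htθ]
    have e1 : ∑ i, ((m:ℝ) * t i + c i) • α i
        = (m:ℝ) • (∑ i, t i • α i) + ∑ i, c i • α i := by
      rw [Finset.smul_sum, ← Finset.sum_add_distrib]
      exact Finset.sum_congr rfl (fun i _ => by rw [add_smul, smul_smul])
    rw [e1, smul_sub]
    abel

lemma re_not_im (h : AffineSetup α δ θ Bl s) {v : V} (hv : v ∈ DelRe α δ s) :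
    v ∉ DelImPos δ := by
  rintro ⟨k, hk, hkv⟩
  obtain ⟨m, ε, hε, hveq⟩ := hv
  have e : m • δ + ε = (k:ℤ) • δ + 0 := by
    rw [add_zero, ← hkv, hveq]
  have := decomp_uniq h (Delo_span h hε) (Submodule.zero_mem _) e
  exact root_ne_zero h hε this.2

lemma add_delpos {x y : V} (hx : x ∈ DelPos α δ θ s) (hy : y ∈ DelPos α δ θ s)
    (hre : x + y ∈ DelRe α δ s) : x + y ∈ DelRePos α δ θ s := by
  obtain ⟨-, cx, hcx0, hcx⟩ := hx
  obtain ⟨-, cy, hcy0, hcy⟩ := hy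
  refine ⟨hre, Or.inl hre, fun o => cx o + cy o,
    fun o => add_nonneg (hcx0 o) (hcy0 o), ?_⟩
  rw [hcx, hcy]
  simp [add_smul, Finset.sum_add_distrib]

lemma brkt_subset (hε : ε ∈ DeloJ α s J) :
    brkt α δ θ s ε ⊆ DelJPosB α δ θ s J := by
  intro v hv
  exact Or.inl (Set.mem_biUnion hε hv)

lemma posComb_span (h : AffineSetup α δ θ Bl s) {v : V} (hv : PosComb α δ θ v)
    (hsp : v ∈ Submodule.span ℝ (Set.range α)) : PosoComb α v := by
  obtain ⟨c, hc0, hceq⟩ := hv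
  have e : v = c none • (δ - θ) + ∑ i, c (some i) • α i := by
    rw [hceq, Fintype.sum_option]
    simp [alHat]
  have hcnone : c none = 0 := by
    by_contra hne
    apply dmt_not_span h
    have e2 : (c none) • (δ - θ) = v - ∑ i, c (some i) • α i := by
      rw [e]
      abel
    have e3 : δ - θ = (c none)⁻¹ • (v - ∑ i, c (some i) • α i) := by
      rw [← e2, smul_smul, inv_mul_cancel₀ hne, one_smul]
    rw [e3]
    exact Submodule.smul_mem _ _ (Submodule.sub_mem _ hsp (Submodule.sum_mem _
      (fun i _ => Submodule.smul_mem _ _ (Submodule.subset_span ⟨i, rfl⟩))))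
  refine ⟨fun i => c (some i), fun i => hc0 _, ?_⟩
  rw [e, hcnone, zero_smul, zero_add]

lemma not_both (h : AffineSetup α δ θ Bl s) {v : V} (hv : v ∈ Delo α s) :
    ¬(PosoComb α v ∧ PosoComb α (-v)) := by
  rintro ⟨h1, h2⟩
  rcases h.base v hv with ⟨-, hn⟩ | ⟨-, hn⟩
  exacts [hn h2, hn h1]

lemma kinj (h : AffineSetup α δ θ Bl s) (ε : V) :
    Function.Injective (fun k : ℕ => (k:ℤ) • δ + ε) := by
  intro a b e
  dsimp only at e
  have e1 : ((a:ℤ)) • δ = ((b:ℤ)) • δ := by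
    have := congrArg (fun v => v - ε) e
    simpa using this
  have e2 : ((a:ℝ)) • δ = ((b:ℝ)) • δ := by
    rw [← Int.cast_smul_eq_zsmul ℝ, ← Int.cast_smul_eq_zsmul ℝ] at e1
    push_cast at e1
    exact e1
  have := smul_left_injective ℝ (delta_ne_zero h) e2
  exact_mod_cast this

end AS
end Aux

/-- Proposition 6.2: let `B` be a real convex set in `Δ_{J+}`, and set
`B̄ = {β̄ | β ∈ B}` and `P_B = {ε ∈ ∘Δ_J | ⟨ε⟩ ∖ B is finite}`. Then `B̄` and `P_B` are
pointed closed subsets of `∘Δ_J` with `P_B ⊆ B̄`; moreover, if `B` is a real biconvex set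
in `Δ_{J+}`, then `P_B` is a pointed biclosed set in `∘Δ_J`. -/
theorem statement14 (α : ι → V) (δ θ : V) (Bl : V →ₗ[ℝ] V →ₗ[ℝ] ℝ) (s : V → V ≃ₗ[ℝ] V)
    (h : AffineSetup α δ θ Bl s) (J : Set ι) (hJ : J.Nonempty) (B : Set V)
    (hconv : ConvexIn (DelJPosB α δ θ s J) B) (hreal : B ⊆ DelRePos α δ θ s)
    (Bbar PB : Set V)
    (hBbar : Bbar = {ε | ε ∈ Delo α s ∧ ∃ m : ℤ, ∃ β ∈ B, β = m • δ + ε})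
    (hPB : PB = {ε ∈ DeloJ α s J | (brkt α δ θ s ε \ B).Finite}) :
    (Bbar ⊆ DeloJ α s J ∧ Bbar ∩ (-Bbar) = ∅ ∧ ClosedIn (Delo α s) Bbar) ∧
    (PB ⊆ DeloJ α s J ∧ PB ∩ (-PB) = ∅ ∧ ClosedIn (Delo α s) PB) ∧
    PB ⊆ Bbar ∧
    (ConvexIn (DelJPosB α δ θ s J) (DelJPosB α δ θ s J \ B) →
      PB ∩ (-PB) = ∅ ∧ ClosedIn (Delo α s) PB ∧
        ClosedIn (Delo α s) (DeloJ α s J \ PB)) := by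
  subst hBbar hPB
  have hBsub := hconv.1
  -- decomposition of elements of B
  have hdec : ∀ β ∈ B, ∃ (k : ℕ) (ε : V), ε ∈ DeloJ α s J ∧ β = (k:ℤ) • δ + ε := by
    intro β hβ
    rcases hBsub hβ with hbr | him
    · rw [brSet, Set.mem_iUnion₂] at hbr
      obtain ⟨ε, hε, ⟨k, hk⟩, -⟩ := hbr
      exact ⟨k, ε, hε, hk⟩
    · exact absurd him (AS.re_not_im h (hreal hβ).1)
  -- G1 : Bbar ⊆ DeloJ
  have hG1 : {ε | ε ∈ Delo α s ∧ ∃ m : ℤ, ∃ β ∈ B, β = m • δ + ε} ⊆ DeloJ α s J := by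
    rintro ε ⟨hεD, m, β, hβ, hβeq⟩
    obtain ⟨k, ε', hε', hk⟩ := hdec β hβ
    have hu := AS.decomp_uniq h (AS.Delo_span h hεD)
      (AS.Delo_span h (AS.DeloJ_subset_Delo hε')) (hβeq.symm.trans hk)
    rw [hu.2]
    exact hε'
  -- refined decomposition: members of Bbar with natural-number witness
  have hdec2 : ∀ ε ∈ {ε | ε ∈ Delo α s ∧ ∃ m : ℤ, ∃ β ∈ B, β = m • δ + ε},
      ∃ (k : ℕ) (β : V), β ∈ B ∧ β = (k:ℤ) • δ + ε := by
    rintro ε ⟨hεD, m, β, hβ, hβeq⟩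
    obtain ⟨k, ε', hε', hk⟩ := hdec β hβ
    have hu := AS.decomp_uniq h (AS.Delo_span h hεD)
      (AS.Delo_span h (AS.DeloJ_subset_Delo hε')) (hβeq.symm.trans hk)
    exact ⟨k, β, hβ, by rw [hk, hu.2]⟩
  -- G2 : Bbar pointed
  have hG2 : {ε | ε ∈ Delo α s ∧ ∃ m : ℤ, ∃ β ∈ B, β = m • δ + ε} ∩
      (-{ε | ε ∈ Delo α s ∧ ∃ m : ℤ, ∃ β ∈ B, β = m • δ + ε}) = ∅ := by
    rw [Set.eq_empty_iff_forall_notMem]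
    rintro ε ⟨hp, hn⟩
    rw [Set.mem_neg] at hn
    obtain ⟨k, β, hβ, hβeq⟩ := hdec2 ε hp
    obtain ⟨l, γ, hγ, hγeq⟩ := hdec2 (-ε) hn
    have hεD := hp.1
    by_cases hkl : k + l = 0
    · have hk0 : k = 0 := by omega
      have hl0 : l = 0 := by omega
      have hβε : β = ε := by
        rw [hβeq, hk0]
        simp
      have hγε : γ = -ε := by
        rw [hγeq, hl0]
        simp
      have h1 : PosoComb α ε := by
        rw [← hβε]
        exact AS.posComb_span h (hreal hβ).2.2 (hβε ▸ AS.Delo_span h hεD)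
      have h2 : PosoComb α (-ε) := by
        rw [← hγε]
        exact AS.posComb_span h (hreal hγ).2.2
          (hγε ▸ AS.Delo_span h (AS.neg_mem_Delo h hεD))
      exact AS.not_both h hεD ⟨h1, h2⟩
    · have hsum : β + γ = ((k + l : ℕ):ℤ) • δ := by
        rw [hβeq, hγeq]
        push_cast
        rw [add_zsmul]
        abel
      have him : β + γ ∈ DelImPos δ := ⟨k + l, by omega, hsum⟩
      have hBmem : β + γ ∈ B := hconv.2 β hβ γ hγ (Or.inr him)
      exact AS.re_not_im h (hreal hBmem).1 him
  -- G3 : Bbar closed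
  have hG3 : ClosedIn (Delo α s)
      {ε | ε ∈ Delo α s ∧ ∃ m : ℤ, ∃ β ∈ B, β = m • δ + ε} := by
    intro ε hε η hη hsumD
    obtain ⟨k, β, hβ, hβeq⟩ := hdec2 ε hε
    obtain ⟨l, γ, hγ, hγeq⟩ := hdec2 η hη
    have hσJ : ε + η ∈ DeloJ α s J := AS.DeloJ_closed h (hG1 hε) (hG1 hη) hsumD
    have hsum : β + γ = ((k + l : ℕ):ℤ) • δ + (ε + η) := by
      rw [hβeq, hγeq]
      push_cast
      rw [add_zsmul]
      abel
    have hRP : β + γ ∈ DelRePos α δ θ s :=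
      AS.add_delpos (hreal hβ).2 (hreal hγ).2 ⟨((k + l : ℕ):ℤ), ε + η, hsumD, hsum⟩
    have hbr : β + γ ∈ brkt α δ θ s (ε + η) := ⟨⟨k + l, hsum⟩, hRP⟩
    have hBmem : β + γ ∈ B := hconv.2 β hβ γ hγ (AS.brkt_subset hσJ hbr)
    exact ⟨hsumD, ((k + l : ℕ):ℤ), β + γ, hBmem, hsum⟩
  -- G7 : PB ⊆ Bbar
  have hG7 : {ε ∈ DeloJ α s J | (brkt α δ θ s ε \ B).Finite} ⊆
      {ε | ε ∈ Delo α s ∧ ∃ m : ℤ, ∃ β ∈ B, β = m • δ + ε} := by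
    rintro ε ⟨hεJ, hεfin⟩
    have hεD := AS.DeloJ_subset_Delo hεJ
    obtain ⟨M, hM⟩ := AS.cofinal h hεD
    have hinf : (brkt α δ θ s ε).Infinite := by
      apply Set.infinite_of_injective_forall_mem
        (f := fun k : ℕ => (((M + k : ℕ):ℤ)) • δ + ε)
      · intro a b e
        have := AS.kinj h ε e
        omega
      · intro k
        exact ⟨⟨M + k, rfl⟩, hM _ (Nat.le_add_right M k)⟩
    obtain ⟨v, hv, hvB⟩ : ∃ v ∈ brkt α δ θ s ε, v ∈ B := by
      by_contra hno
      push_neg at hno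
      exact hinf (hεfin.subset (fun v hv => ⟨hv, hno v hv⟩))
    obtain ⟨⟨k, hk⟩, -⟩ := hv
    exact ⟨hεD, k, v, hvB, hk⟩
  -- G6 : PB closed
  have hG6 : ClosedIn (Delo α s) {ε ∈ DeloJ α s J | (brkt α δ θ s ε \ B).Finite} := by
    rintro ε ⟨hεJ, hεfin⟩ η ⟨hηJ, hηfin⟩ hsumD
    have hσJ := AS.DeloJ_closed h hεJ hηJ hsumD
    refine ⟨hσJ, ?_⟩
    have hgood : ∀ ζ, ζ ∈ DeloJ α s J → (brkt α δ θ s ζ \ B).Finite →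
        ∃ N : ℕ, ∀ k : ℕ, N ≤ k → ((k:ℤ) • δ + ζ) ∈ B := by
      intro ζ hζJ hfin
      obtain ⟨M, hM⟩ := AS.cofinal h (AS.DeloJ_subset_Delo hζJ)
      have hpre : {k : ℕ | ((k:ℤ) • δ + ζ) ∈ brkt α δ θ s ζ \ B}.Finite :=
        hfin.preimage (Set.injOn_of_injective (AS.kinj h ζ))
      obtain ⟨N0, hN0⟩ := hpre.bddAbove
      refine ⟨max M (N0 + 1), fun k hk => ?_⟩
      have hk1 : M ≤ k := le_trans (le_max_left _ _) hk
      have hmem : ((k:ℤ) • δ + ζ) ∈ brkt α δ θ s ζ := ⟨⟨k, rfl⟩, hM k hk1⟩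
      by_contra hkB
      have hin : k ∈ {k : ℕ | ((k:ℤ) • δ + ζ) ∈ brkt α δ θ s ζ \ B} := ⟨hmem, hkB⟩
      have := hN0 hin
      have hk2 : N0 + 1 ≤ k := le_trans (le_max_right _ _) hk
      omega
    obtain ⟨Nε, hNε⟩ := hgood ε hεJ hεfin
    obtain ⟨Nη, hNη⟩ := hgood η hηJ hηfin
    have hbig : ∀ k : ℕ, Nε + Nη ≤ k → ((k:ℤ) • δ + (ε + η)) ∈ B := by
      intro k hk
      have hx := hNε Nε (le_refl _)
      have hy := hNη (k - Nε) (by omega)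
      have hsum2 : (((Nε:ℕ):ℤ) • δ + ε) + (((k - Nε : ℕ):ℤ) • δ + η)
          = (k:ℤ) • δ + (ε + η) := by
        rw [show ((k:ℕ):ℤ) = ((Nε:ℕ):ℤ) + ((k - Nε : ℕ):ℤ) by push_cast; omega]
        rw [add_zsmul]
        abel
      have hre : ((k:ℤ) • δ + (ε + η)) ∈ DelRe α δ s := ⟨(k:ℤ), ε + η, hsumD, rfl⟩
      have hRP : ((k:ℤ) • δ + (ε + η)) ∈ DelRePos α δ θ s := by
        rw [← hsum2]
        exact AS.add_delpos (hreal hx).2 (hreal hy).2 (by rw [hsum2]; exact hre)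
      have hbr : ((k:ℤ) • δ + (ε + η)) ∈ brkt α δ θ s (ε + η) := ⟨⟨k, rfl⟩, hRP⟩
      rw [← hsum2]
      exact hconv.2 _ hx _ hy (by rw [hsum2]; exact AS.brkt_subset hσJ hbr)
    have hss : brkt α δ θ s (ε + η) \ B ⊆
        (fun k : ℕ => (k:ℤ) • δ + (ε + η)) '' (Set.Iio (Nε + Nη)) := by
      rintro v ⟨⟨⟨k, rfl⟩, -⟩, hvB⟩
      refine ⟨k, ?_, rfl⟩
      by_contra hk
      rw [Set.mem_Iio, not_lt] at hk
      exact hvB (hbig k hk)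
    exact ((Set.finite_Iio _).image _).subset hss
  -- G5 : PB pointed
  have hG5 : {ε ∈ DeloJ α s J | (brkt α δ θ s ε \ B).Finite} ∩
      (-{ε ∈ DeloJ α s J | (brkt α δ θ s ε \ B).Finite}) = ∅ := by
    rw [Set.eq_empty_iff_forall_notMem]
    rintro ε ⟨hp, hn⟩
    rw [Set.mem_neg] at hn
    rw [Set.eq_empty_iff_forall_notMem] at hG2
    exact hG2 ε ⟨hG7 hp, Set.mem_neg.mpr (hG7 hn)⟩
  refine ⟨⟨hG1, hG2, hG3⟩, ⟨fun ε hε => hε.1, hG5, hG6⟩, hG7, fun hco => ⟨hG5, hG6, ?_⟩⟩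
  -- G8 : complement closed
  rintro ε ⟨hεJ, hεn⟩ η ⟨hηJ, hηn⟩ hsumD
  have hσJ := AS.DeloJ_closed h hεJ hηJ hsumD
  refine ⟨hσJ, fun hmem => ?_⟩
  obtain ⟨-, hσfin⟩ := hmem
  have hεnf : ¬(brkt α δ θ s ε \ B).Finite := fun hf => hεn ⟨hεJ, hf⟩
  have hηnf : ¬(brkt α δ θ s η \ B).Finite := fun hf => hηn ⟨hηJ, hf⟩
  have hSinf : ∀ ζ, ¬(brkt α δ θ s ζ \ B).Finite →
      {k : ℕ | ((k:ℤ) • δ + ζ) ∈ brkt α δ θ s ζ \ B}.Infinite := by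
    intro ζ hnf hfin
    apply hnf
    have hss : brkt α δ θ s ζ \ B ⊆
        (fun k : ℕ => (k:ℤ) • δ + ζ) '' {k : ℕ | ((k:ℤ) • δ + ζ) ∈ brkt α δ θ s ζ \ B} := by
      rintro v ⟨⟨⟨k, rfl⟩, hRP⟩, hvB⟩
      exact ⟨k, ⟨⟨⟨k, rfl⟩, hRP⟩, hvB⟩, rfl⟩
    exact (hfin.image _).subset hss
  have hεinf := hSinf ε hεnf
  have hηinf := hSinf η hηnf
  obtain ⟨n0, hn0br, hn0B⟩ := hηinf.nonempty
  have himg : ∀ m ∈ {k : ℕ | ((k:ℤ) • δ + ε) ∈ brkt α δ θ s ε \ B},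
      (((m + n0 : ℕ):ℤ) • δ + (ε + η)) ∈ brkt α δ θ s (ε + η) \ B := by
    rintro m ⟨hmbr, hmB⟩
    have hsum2 : (((m:ℕ):ℤ) • δ + ε) + (((n0:ℕ):ℤ) • δ + η)
        = ((m + n0 : ℕ):ℤ) • δ + (ε + η) := by
      push_cast
      rw [add_zsmul]
      abel
    have hre : (((m + n0 : ℕ):ℤ) • δ + (ε + η)) ∈ DelRe α δ s :=
      ⟨((m + n0 : ℕ):ℤ), ε + η, hsumD, rfl⟩
    have hRP : (((m + n0 : ℕ):ℤ) • δ + (ε + η)) ∈ DelRePos α δ θ s := by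
      rw [← hsum2]
      exact AS.add_delpos hmbr.2.2 hn0br.2.2 (by rw [hsum2]; exact hre)
    have hbr : (((m + n0 : ℕ):ℤ) • δ + (ε + η)) ∈ brkt α δ θ s (ε + η) :=
      ⟨⟨m + n0, rfl⟩, hRP⟩
    have hxD : (((m:ℕ):ℤ) • δ + ε) ∈ DelJPosB α δ θ s J \ B :=
      ⟨AS.brkt_subset hεJ hmbr, hmB⟩
    have hyD : (((n0:ℕ):ℤ) • δ + η) ∈ DelJPosB α δ θ s J \ B :=
      ⟨AS.brkt_subset hηJ hn0br, hn0B⟩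
    have hcc := hco.2 _ hxD _ hyD (by rw [hsum2]; exact AS.brkt_subset hσJ hbr)
    rw [hsum2] at hcc
    exact ⟨hbr, hcc.2⟩
  have hinj : Set.InjOn (fun m : ℕ => ((m + n0 : ℕ):ℤ) • δ + (ε + η))
      {k : ℕ | ((k:ℤ) • δ + ε) ∈ brkt α δ θ s ε \ B} := by
    intro a _ b _ e
    have := AS.kinj h (ε + η) e
    omega
  exact ((hεinf.image hinj).mono (by rintro v ⟨m, hm, rfl⟩; exact himg m hm)) hσfin


end
end
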